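/- Let H and K be complex Hilbert spaces whose Hilbert dimensions are both at least 2, and let e₁, e₂ be collinear rank-one partial isometries in B(H,K). Then there exists a rank-one partial isometry u ∈ B(H,K) such that u is orthogonal to e₁ (e₁∘u* = 0 and u*∘e₁ = 0) and u is collinear with e₂. -/

import Mathlib

noncomputable section

/-- A partial isometry between Hilbert spaces: `e ∘ e* ∘ e = e`. -/
def IsPartialIsom {H K : Type*}
    [NormedAddCommGroup H] [InnerProductSpace ℂ H] [CompleteSpace H]
    [NormedAddCommGroup K] [InnerProductSpace ℂ K] [CompleteSpace K]
    (e : H →L[ℂ] K) : Prop :=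
  e.comp ((ContinuousLinearMap.adjoint e).comp e) = e

/-- Two operators `a, b` are orthogonal: `a ∘ b* = 0` and `b* ∘ a = 0`. -/
def OrthogonalOps {H K : Type*}
    [NormedAddCommGroup H] [InnerProductSpace ℂ H] [CompleteSpace H]
    [NormedAddCommGroup K] [InnerProductSpace ℂ K] [CompleteSpace K]
    (a b : H →L[ℂ] K) : Prop :=
  a.comp (ContinuousLinearMap.adjoint b) = 0 ∧ (ContinuousLinearMap.adjoint b).comp a = 0

/-- Two rank-one partial isometries `a, b` are collinear:
`a∘a*∘b + b∘a*∘a = b` and `b∘b*∘a + a∘b*∘b = a`. -/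
def CollinearOps {H K : Type*}
    [NormedAddCommGroup H] [InnerProductSpace ℂ H] [CompleteSpace H]
    [NormedAddCommGroup K] [InnerProductSpace ℂ K] [CompleteSpace K]
    (a b : H →L[ℂ] K) : Prop :=
  a.comp ((ContinuousLinearMap.adjoint a).comp b) +
      b.comp ((ContinuousLinearMap.adjoint a).comp a) = b ∧
    b.comp ((ContinuousLinearMap.adjoint b).comp a) +
      a.comp ((ContinuousLinearMap.adjoint b).comp b) = a

open ContinuousLinearMap Module

local notation "⟪" x ", " y "⟫" => @inner ℂ _ _ x y

section rkdefs

set_option linter.unusedSectionVars false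

variable {E F G : Type*}
    [NormedAddCommGroup E] [InnerProductSpace ℂ E] [CompleteSpace E]
    [NormedAddCommGroup F] [InnerProductSpace ℂ F] [CompleteSpace F]
    [NormedAddCommGroup G] [InnerProductSpace ℂ G] [CompleteSpace G]

/-- rank one operator x ↦ ⟪v,x⟫ • w -/
def rk (w : F) (v : E) : E →L[ℂ] F := (innerSL ℂ v).smulRight w

@[simp] lemma rk_apply (w : F) (v : E) (x : E) : rk w v x = ⟪v, x⟫ • w := rfl

lemma adjoint_rk (w : F) (v : E) : ContinuousLinearMap.adjoint (rk w v) = rk v w := by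
  symm
  rw [ContinuousLinearMap.eq_adjoint_iff]
  intro x y
  simp only [rk_apply, inner_smul_left, inner_smul_right, RCLike.star_def, map_mul,
    inner_conj_symm]
  ring

lemma rk_comp (w : G) (v : F) (w' : F) (v' : E) :
    (rk w v).comp (rk w' v') = ⟪v, w'⟫ • rk w v' := by
  ext x
  simp only [ContinuousLinearMap.comp_apply, rk_apply, inner_smul_right,
    ContinuousLinearMap.smul_apply, smul_smul]
  ring_nf

lemma rk_ne_zero (w : F) (v : E) (hw : w ≠ 0) (hv : v ≠ 0) : rk w v ≠ 0 := by
  intro h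
  have := congrArg (fun T : E →L[ℂ] F => T v) h
  simp only [rk_apply, ContinuousLinearMap.zero_apply] at this
  rcases smul_eq_zero.mp this with h' | h'
  · exact hv (inner_self_eq_zero.mp h')
  · exact hw h'

lemma rk_isPartialIsom (w : F) (v : E) (h : ⟪v, v⟫ * ⟪w, w⟫ = 1) : IsPartialIsom (rk w v) := by
  unfold IsPartialIsom
  rw [adjoint_rk, rk_comp, ContinuousLinearMap.comp_smul, rk_comp, smul_smul]
  rw [show ⟪w, w⟫ * ⟪v, v⟫ = 1 by rw [mul_comm]; exact h, one_smul]

lemma rk_finrank_range (w : F) (v : E) (hw : w ≠ 0) (hv : v ≠ 0) :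
    Module.finrank ℂ (LinearMap.range (rk w v : E →ₗ[ℂ] F)) = 1 := by
  have hrange : LinearMap.range (rk w v : E →ₗ[ℂ] F) = Submodule.span ℂ {w} := by
    apply le_antisymm
    · rintro y ⟨x, rfl⟩
      exact Submodule.smul_mem _ _ (Submodule.mem_span_singleton_self w)
    · rw [Submodule.span_singleton_le_iff_mem]
      refine ⟨(⟪v, v⟫)⁻¹ • v, ?_⟩
      simp only [ContinuousLinearMap.coe_coe, rk_apply, inner_smul_right]
      rw [inv_mul_cancel₀ (inner_self_ne_zero.mpr hv), one_smul]
  rw [hrange]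
  exact finrank_span_singleton hw

/-- Every rank-one partial isometry is of the form rk w v. -/
lemma exists_rk_rep (e : E →L[ℂ] F) (h : IsPartialIsom e)
    (hr : Module.finrank ℂ (LinearMap.range (e : E →ₗ[ℂ] F)) = 1) :
    ∃ (w : F) (v : E), e = rk w v ∧ w ≠ 0 ∧ v ≠ 0 ∧ ⟪v, v⟫ * ⟪w, w⟫ = 1 := by
  have hne : e ≠ 0 := by
    intro h0
    rw [h0] at hr
    have hbot : LinearMap.range ((0 : E →L[ℂ] F) : E →ₗ[ℂ] F) = ⊥ := by
      ext y; simp [LinearMap.mem_range, eq_comm]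
    rw [hbot] at hr
    simp [finrank_bot] at hr
  obtain ⟨x₀, hx₀⟩ : ∃ x₀, e x₀ ≠ 0 := by
    by_contra hc
    push_neg at hc
    exact hne (by ext x; simpa using hc x)
  set w : F := e x₀ with hw
  have hwmem : w ∈ LinearMap.range (e : E →ₗ[ℂ] F) := ⟨x₀, rfl⟩
  have hmul : ∀ x : E, ∃ c : ℂ, e x = c • w := by
    intro x
    have := (finrank_eq_one_iff_of_nonzero' (⟨w, hwmem⟩ : LinearMap.range (e : E →ₗ[ℂ] F))
      (by simpa using hx₀)).mp hr ⟨e x, ⟨x, rfl⟩⟩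
    obtain ⟨c, hc⟩ := this
    exact ⟨c, by simpa [Subtype.ext_iff] using hc.symm⟩
  set v : E := ((‖w‖ : ℂ) ^ 2)⁻¹ • (ContinuousLinearMap.adjoint e w) with hv
  have hrep : e = rk w v := by
    ext x
    obtain ⟨c, hc⟩ := hmul x
    have hinner : ⟪v, x⟫ = c := by
      rw [hv]
      rw [inner_smul_left]
      rw [ContinuousLinearMap.adjoint_inner_left]
      rw [hc, inner_smul_right, inner_self_eq_norm_sq_to_K]
      have hw2 : ((‖w‖ : ℂ)) ^ 2 ≠ 0 := by
        simpa [norm_eq_zero, hw] using hx₀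
      field_simp
      rw [map_div₀, map_one, map_pow, Complex.conj_ofReal]
      field_simp
      exact mul_div_cancel_right₀ c hw2
    rw [rk_apply, hinner, hc]
  have hvne : v ≠ 0 := by
    intro h0
    refine hx₀ ?_
    show e x₀ = 0
    rw [hrep, rk_apply, h0, inner_zero_left, zero_smul]
  have hnorm : ⟪v, v⟫ * ⟪w, w⟫ = 1 := by
    have := h
    unfold IsPartialIsom at this
    rw [hrep, adjoint_rk, rk_comp, ContinuousLinearMap.comp_smul, rk_comp, smul_smul] at this
    have h2 : (⟪w, w⟫ * ⟪v, v⟫ - 1) • rk w v = 0 := by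
      rw [sub_smul, one_smul, this, sub_self]
    rcases smul_eq_zero.mp h2 with h' | h'
    · rw [mul_comm] at h'
      linear_combination h'
    · exact absurd h' (rk_ne_zero w v hx₀ hvne)
  exact ⟨w, v, hrep, hx₀, hvne, hnorm⟩

/-- there is a nonzero vector orthogonal to a given one, in dim ≥ 2 -/
lemma exists_perp (h2 : ∃ f : Fin 2 → E, Orthonormal ℂ f) (x : E) :
    ∃ z : E, z ≠ 0 ∧ ⟪x, z⟫ = 0 := by
  obtain ⟨f, hf⟩ := h2
  by_cases h : ⟪x, f 0⟫ = 0
  · exact ⟨f 0, hf.ne_zero 0, h⟩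
  · refine ⟨⟪x, f 0⟫ • f 1 - ⟪x, f 1⟫ • f 0, ?_, ?_⟩
    · intro h0
      apply h
      have := congrArg (fun y => ⟪f 1, y⟫) h0
      have h10 : ⟪f 1, f 0⟫ = 0 := hf.2 (show (1:Fin 2) ≠ 0 by decide)
      have h11 : ⟪f 1, f 1⟫ = 1 := by
        rw [inner_self_eq_norm_sq_to_K, hf.1 1]; norm_num
      simpa [inner_sub_right, inner_smul_right, h10, h11, hf.ne_zero 1] using this
    · simp [inner_sub_right, inner_smul_right]
      ring

/-- normalizing constant -/
lemma exists_real_normalizer (z : E) (y : G) (hz : z ≠ 0) (hy : y ≠ 0) :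
    ∃ r : ℝ, r ≠ 0 ∧ ⟪y, y⟫ * ⟪(r : ℂ) • z, (r : ℂ) • z⟫ = 1 := by
  refine ⟨(‖y‖ * ‖z‖)⁻¹, ?_, ?_⟩
  · simp [norm_eq_zero, hz, hy]
  · rw [inner_smul_left, inner_smul_right, inner_self_eq_norm_sq_to_K,
      inner_self_eq_norm_sq_to_K]
    rw [Complex.conj_ofReal]
    have h1 : (‖y‖ : ℂ) ≠ 0 := by
      simpa using norm_ne_zero_iff.mpr hy
    have h2 : (‖z‖ : ℂ) ≠ 0 := by
      simpa using norm_ne_zero_iff.mpr hz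
    push_cast
    field_simp
    rfl

/-- collinearity when the two operators share the `v` and have orthogonal `w`s -/
lemma collinear_same_right (w w' : F) (v : E)
    (hn : ⟪v, v⟫ * ⟪w, w⟫ = 1) (hn' : ⟪v, v⟫ * ⟪w', w'⟫ = 1) (h0 : ⟪w', w⟫ = 0) :
    CollinearOps (rk w' v) (rk w v) := by
  have h0' : ⟪w, w'⟫ = 0 := by rw [← inner_conj_symm, h0, map_zero]
  constructor
  · rw [adjoint_rk, rk_comp, rk_comp, h0, zero_smul, comp_zero, zero_add,
      ContinuousLinearMap.comp_smul, rk_comp, smul_smul,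
      show ⟪w', w'⟫ * ⟪v, v⟫ = 1 by linear_combination hn', one_smul]
  · rw [adjoint_rk, rk_comp, rk_comp, h0', zero_smul, comp_zero, zero_add,
      ContinuousLinearMap.comp_smul, rk_comp, smul_smul,
      show ⟪w, w⟫ * ⟪v, v⟫ = 1 by linear_combination hn, one_smul]

/-- collinearity when the two operators share the `w` and have orthogonal `v`s -/
lemma collinear_same_left (w : F) (v v' : E)
    (hn : ⟪v, v⟫ * ⟪w, w⟫ = 1) (hn' : ⟪v', v'⟫ * ⟪w, w⟫ = 1) (h0 : ⟪v', v⟫ = 0) :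
    CollinearOps (rk w v') (rk w v) := by
  have h0' : ⟪v, v'⟫ = 0 := by rw [← inner_conj_symm, h0, map_zero]
  constructor
  · rw [adjoint_rk, rk_comp, rk_comp, ContinuousLinearMap.comp_smul, rk_comp, smul_smul,
      ContinuousLinearMap.comp_smul, rk_comp, smul_smul, h0', mul_zero, zero_smul, add_zero,
      show ⟪w, w⟫ * ⟪v', v'⟫ = 1 by linear_combination hn', one_smul]
  · rw [adjoint_rk, rk_comp, rk_comp, ContinuousLinearMap.comp_smul, rk_comp, smul_smul,
      ContinuousLinearMap.comp_smul, rk_comp, smul_smul, h0, mul_zero, zero_smul, add_zero,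
      show ⟪w, w⟫ * ⟪v, v⟫ = 1 by linear_combination hn, one_smul]

end rkdefs

/-- Given two collinear rank-one partial isometries `e₁ ⊤ e₂` in `B(H,K)` with
`dim H, dim K ≥ 2`, there is a rank-one partial isometry `u` orthogonal to `e₁` and
collinear with `e₂`. -/
theorem exists_orthogonal_collinear_partialIsometry
    {H K : Type*}
    [NormedAddCommGroup H] [InnerProductSpace ℂ H] [CompleteSpace H]
    [NormedAddCommGroup K] [InnerProductSpace ℂ K] [CompleteSpace K]
    (hdimH : ∃ v : Fin 2 → H, Orthonormal ℂ v)
    (hdimK : ∃ w : Fin 2 → K, Orthonormal ℂ w)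
    (e₁ e₂ : H →L[ℂ] K)
    (h₁ : IsPartialIsom e₁) (h₂ : IsPartialIsom e₂)
    (hr₁ : Module.finrank ℂ (LinearMap.range (e₁ : H →ₗ[ℂ] K)) = 1)
    (hr₂ : Module.finrank ℂ (LinearMap.range (e₂ : H →ₗ[ℂ] K)) = 1)
    (hcol : CollinearOps e₁ e₂) :
    ∃ u : H →L[ℂ] K, IsPartialIsom u ∧ Module.finrank ℂ (LinearMap.range (u : H →ₗ[ℂ] K)) = 1 ∧
      OrthogonalOps e₁ u ∧ CollinearOps u e₂ := by
  obtain ⟨w₁, v₁, he₁, hw₁, hv₁, hn₁⟩ := exists_rk_rep e₁ h₁ hr₁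
  obtain ⟨w₂, v₂, he₂, hw₂, hv₂, hn₂⟩ := exists_rk_rep e₂ h₂ hr₂
  have hcol1 := hcol.1
  have hcol2 := hcol.2
  rw [he₁, he₂, adjoint_rk] at hcol1
  rw [he₁, he₂, adjoint_rk] at hcol2
  simp only [rk_comp, ContinuousLinearMap.comp_smul, smul_smul] at hcol1 hcol2
  -- hcol1 : (⟪w₁,w₂⟫ * ⟪v₁,v₁⟫) • rk w₁ v₂ + (⟪w₁,w₁⟫ * ⟪v₂,v₁⟫) • rk w₂ v₁ = rk w₂ v₂
  -- dichotomy
  have happ := DFunLike.congr_fun hcol1 v₁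
  simp only [ContinuousLinearMap.add_apply, ContinuousLinearMap.smul_apply, rk_apply,
    smul_smul] at happ
  have hcoef : ⟪w₁, w₁⟫ * ⟪v₂, v₁⟫ * ⟪v₁, v₁⟫ = ⟪v₂, v₁⟫ := by
    linear_combination ⟪v₂, v₁⟫ * hn₁
  rw [hcoef] at happ
  have hzero : (⟪w₁, w₂⟫ * ⟪v₁, v₁⟫ * ⟪v₂, v₁⟫) • w₁ = 0 :=
    add_right_cancel (happ.trans (zero_add (⟪v₂, v₁⟫ • w₂)).symm)
  have hv₁v₁ : ⟪v₁, v₁⟫ ≠ 0 := inner_self_ne_zero.mpr hv₁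
  have hd : ⟪w₁, w₂⟫ = 0 ∨ ⟪v₂, v₁⟫ = 0 := by
    rcases smul_eq_zero.mp hzero with hc | hbad
    · rcases mul_eq_zero.mp hc with hc' | h2
      · rcases mul_eq_zero.mp hc' with h1 | h1
        · exact Or.inl h1
        · exact absurd h1 hv₁v₁
      · exact Or.inr h2
    · exact absurd hbad hw₁
  rcases hd with hw12 | hv21
  · -- Case B : ⟪w₁, w₂⟫ = 0 ; then v₂ is parallel to v₁
    have hw21 : ⟪w₂, w₁⟫ = 0 := by rw [← inner_conj_symm, hw12, map_zero]
    rw [hw21, zero_mul, zero_smul, zero_add] at hcol2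
    -- hcol2 : (⟪w₂,w₂⟫ * ⟪v₁,v₂⟫) • rk w₁ v₂ = rk w₁ v₁
    set c : ℂ := ⟪w₂, w₂⟫ * ⟪v₁, v₂⟫ with hc
    have hcne : c ≠ 0 := by
      have h := DFunLike.congr_fun hcol2 v₁
      simp only [ContinuousLinearMap.smul_apply, rk_apply, smul_smul] at h
      intro h0
      rw [h0, zero_mul, zero_smul] at h
      exact hv₁v₁ (by
        rcases smul_eq_zero.mp h.symm with h' | h'
        · exact h'
        · exact absurd h' hw₁)
    obtain ⟨z, hzne, hv₁z⟩ := exists_perp hdimH v₁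
    have hv₂z : ⟪v₂, z⟫ = 0 := by
      have h := DFunLike.congr_fun hcol2 z
      simp only [ContinuousLinearMap.smul_apply, rk_apply, smul_smul] at h
      rw [hv₁z, zero_smul] at h
      rcases smul_eq_zero.mp h with h' | h'
      · exact (mul_eq_zero.mp h').resolve_left hcne
      · exact absurd h' hw₁
    obtain ⟨r, hr, hnr⟩ := exists_real_normalizer z w₂ hzne hw₂
    set v' : H := (r : ℂ) • z with hv'
    have hv'ne : v' ≠ 0 := smul_ne_zero (by exact_mod_cast hr) hzne
    have hn' : ⟪v', v'⟫ * ⟪w₂, w₂⟫ = 1 := by rw [mul_comm]; exact hnr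
    have hv'v₂ : ⟪v', v₂⟫ = 0 := by
      rw [hv', inner_smul_left]
      rw [show ⟪z, v₂⟫ = 0 by rw [← inner_conj_symm, hv₂z, map_zero], mul_zero]
    have hv₁v' : ⟪v₁, v'⟫ = 0 := by rw [hv', inner_smul_right, hv₁z, mul_zero]
    refine ⟨rk w₂ v', rk_isPartialIsom w₂ v' hn', rk_finrank_range w₂ v' hw₂ hv'ne, ⟨?_, ?_⟩, ?_⟩
    · rw [he₁, adjoint_rk, rk_comp, hv₁v', zero_smul]
    · rw [he₁, adjoint_rk, rk_comp, hw21, zero_smul]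
    · rw [he₂]
      exact collinear_same_left w₂ v₂ v' hn₂ hn' hv'v₂
  · -- Case A : ⟪v₂, v₁⟫ = 0 ; then w₂ is parallel to w₁
    have hv12 : ⟪v₁, v₂⟫ = 0 := by rw [← inner_conj_symm, hv21, map_zero]
    rw [hv21, mul_zero, zero_smul, add_zero] at hcol1
    -- hcol1 : (⟪w₁,w₂⟫ * ⟪v₁,v₁⟫) • rk w₁ v₂ = rk w₂ v₂
    set c : ℂ := ⟪w₁, w₂⟫ * ⟪v₁, v₁⟫ with hc
    have hv₂v₂ : ⟪v₂, v₂⟫ ≠ 0 := inner_self_ne_zero.mpr hv₂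
    have hw₂eq : w₂ = c • w₁ := by
      have h := DFunLike.congr_fun hcol1 v₂
      simp only [ContinuousLinearMap.smul_apply, rk_apply, smul_smul] at h
      have h2 : ⟪v₂, v₂⟫ • w₂ = ⟪v₂, v₂⟫ • (c • w₁) := by
        rw [smul_smul, mul_comm]
        exact h.symm
      exact smul_right_injective K hv₂v₂ h2
    obtain ⟨z, hzne, hw₁z⟩ := exists_perp hdimK w₁
    obtain ⟨r, hr, hnr⟩ := exists_real_normalizer z v₂ hzne hv₂
    set w' : K := (r : ℂ) • z with hw'
    have hw'ne : w' ≠ 0 := smul_ne_zero (by exact_mod_cast hr) hzne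
    have hzw₁ : ⟪z, w₁⟫ = 0 := by rw [← inner_conj_symm, hw₁z, map_zero]
    have hw'w₁ : ⟪w', w₁⟫ = 0 := by rw [hw', inner_smul_left, hzw₁, mul_zero]
    have hw'w₂ : ⟪w', w₂⟫ = 0 := by
      rw [hw₂eq, inner_smul_right, hw', inner_smul_left, hzw₁, mul_zero, mul_zero]
    refine ⟨rk w' v₂, rk_isPartialIsom w' v₂ hnr, rk_finrank_range w' v₂ hw'ne hv₂, ⟨?_, ?_⟩, ?_⟩
    · rw [he₁, adjoint_rk, rk_comp, hv12, zero_smul]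
    · rw [he₁, adjoint_rk, rk_comp, hw'w₁, zero_smul]
    · rw [he₂]
      exact collinear_same_right w₂ w' v₂ hn₂ hnr hw'w₂
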